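/- Let 4 < p < ∞. There is a constant C_p depending only on p such that for every t ≥ 1, every c ∈ ℝ, and every z = α + iβ ∈ ℂ one has ∫_{0}^{∞} ∫_{v}^{∞} ((α - c - u)² + (β - v)²)^{-1/2} · t^{-1/6} · (u² + v²)^{-1/4} · e^{-16·u²·v} du dv ≤ C_p · t^{2/(3p) - 1/6}. -/

import Mathlib

open Real MeasureTheory Set intervalIntegral

set_option maxHeartbeats 1000000
section
namespace Stmt15Aux


noncomputable def hB : ℝ → ℝ := Set.indicator (Set.Ioo (-1 : ℝ) 1) (fun y => |y| ^ (-(3:ℝ)/4))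

lemma hB_nonneg (x : ℝ) : 0 ≤ hB x :=
  Set.indicator_nonneg (fun y _ => Real.rpow_nonneg (abs_nonneg y) _) x

lemma integrableOn_abs_rpow : IntegrableOn (fun y : ℝ => |y| ^ (-(3:ℝ)/4)) (Set.Ioo (-1:ℝ) 1) := by
  have hr : (-1:ℝ) < -(3:ℝ)/4 := by norm_num
  have J : IntervalIntegrable (fun y : ℝ => |y| ^ (-(3:ℝ)/4)) volume 0 1 := by
    rw [intervalIntegrable_iff_integrableOn_Ioc_of_le zero_le_one]
    refine ((intervalIntegrable_rpow' hr (a := 0) (b := 1)).def'.mono_set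
      (by rw [uIoc_of_le zero_le_one])).congr_fun (fun x hx => ?_) measurableSet_Ioc
    rw [abs_of_pos hx.1]
  have J2 : IntervalIntegrable (fun y : ℝ => |y| ^ (-(3:ℝ)/4)) volume 0 (-1) := by
    have := ((IntervalIntegrable.iff_comp_neg (a := 0) (b := 1) (f := fun y : ℝ => |y| ^ (-(3:ℝ)/4))).1 J)
    simpa [abs_neg] using this
  have h1 : IntegrableOn (fun y : ℝ => |y| ^ (-(3:ℝ)/4)) (Set.Ioc (0:ℝ) 1) := by
    rwa [intervalIntegrable_iff_integrableOn_Ioc_of_le zero_le_one] at J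
  have h2 : IntegrableOn (fun y : ℝ => |y| ^ (-(3:ℝ)/4)) (Set.Ioc (-1:ℝ) 0) := by
    rw [intervalIntegrable_iff] at J2
    simpa [uIoc, min_def, max_def] using J2
  exact (h2.union h1).mono_set (fun x hx => by
    rcases le_or_gt x 0 with h | h
    · exact Or.inl ⟨hx.1, h⟩
    · exact Or.inr ⟨h, hx.2.le⟩)

lemma hB_integrable : Integrable hB := by
  rw [hB, integrable_indicator_iff measurableSet_Ioo]
  exact integrableOn_abs_rpow

lemma hB_comp_integrable (a : ℝ) : Integrable (fun x => hB (x - a)) :=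
  hB_integrable.comp_sub_right a

lemma hB_comp_integral (a : ℝ) : ∫ x, hB (x - a) = ∫ x, hB x :=
  integral_sub_right_eq_self hB a



lemma mul_le_rpow_add_cube {a b : ℝ} (ha : 0 ≤ a) (hb : 0 ≤ b) :
    a * b ≤ a ^ ((3:ℝ)/2) + b ^ 3 := by
  rcases le_or_gt a (b ^ 2) with h | h
  · have : a * b ≤ b ^ 3 := by nlinarith
    have h2 : 0 ≤ a ^ ((3:ℝ)/2) := Real.rpow_nonneg ha _
    linarith
  · have hb' : b ≤ Real.sqrt a := by
      rw [show a = Real.sqrt a ^ 2 from (Real.sq_sqrt ha).symm] at h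
      nlinarith [Real.sqrt_nonneg a]
    have : a * b ≤ a * Real.sqrt a := by
      apply mul_le_mul_of_nonneg_left hb' ha
    have heq : a * Real.sqrt a = a ^ ((3:ℝ)/2) := by
      rw [Real.sqrt_eq_rpow, show (3:ℝ)/2 = 1 + 1/2 by norm_num,
        Real.rpow_add' ha (by norm_num), Real.rpow_one]
    nlinarith [pow_nonneg hb 3]

lemma exp_neg_le_rpow {x : ℝ} (hx : 0 < x) : Real.exp (-x) ≤ x ^ (-(3:ℝ)/4) := by
  have h1 : x ^ ((3:ℝ)/4) ≤ Real.exp x := by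
    rcases le_or_gt 1 x with h | h
    · calc x ^ ((3:ℝ)/4) ≤ x ^ (1:ℝ) :=
            Real.rpow_le_rpow_of_exponent_le h (by norm_num)
        _ = x := Real.rpow_one x
        _ ≤ Real.exp x := by linarith [Real.add_one_le_exp x]
    · calc x ^ ((3:ℝ)/4) ≤ 1 := Real.rpow_le_one hx.le h.le (by norm_num)
        _ ≤ Real.exp x := by linarith [Real.add_one_le_exp x, hx]
  have h2 : 0 < x ^ ((3:ℝ)/4) := Real.rpow_pos_of_pos hx _
  rw [Real.exp_neg, show -(3:ℝ)/4 = -((3:ℝ)/4) by norm_num, Real.rpow_neg hx.le]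
  exact inv_anti₀ h2 h1



noncomputable def Gmaj (v u : ℝ) : ℝ :=
  if v ≤ 1 then
    u ^ (-(3:ℝ)/2) + Set.indicator (Set.Ioo (0:ℝ) 1) (fun x => x ^ (-(1:ℝ)/2)) u
      + Set.indicator (Set.Ioi (1:ℝ))
          (fun x => (16:ℝ) ^ (-(3:ℝ)/4) * v ^ (-(3:ℝ)/4) * x ^ (-(5:ℝ)/4)) u
  else 2 * Real.exp (-8*v) * Real.exp (-8*u)

lemma ind2_nonneg {v u : ℝ} (hv : 0 ≤ v) : 0 ≤ Set.indicator (Set.Ioi (1:ℝ))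
    (fun x => (16:ℝ) ^ (-(3:ℝ)/4) * v ^ (-(3:ℝ)/4) * x ^ (-(5:ℝ)/4)) u :=
  Set.indicator_nonneg (fun y hy => mul_nonneg (mul_nonneg (Real.rpow_nonneg (by norm_num) _)
    (Real.rpow_nonneg hv _)) (Real.rpow_nonneg (zero_le_one.trans (le_of_lt hy)) _)) u

lemma ind1_nonneg (u : ℝ) :
    0 ≤ Set.indicator (Set.Ioo (0:ℝ) 1) (fun x => x ^ (-(1:ℝ)/2)) u :=
  Set.indicator_nonneg (fun y hy => Real.rpow_nonneg hy.1.le _) u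

lemma Gmaj_nonneg {v u : ℝ} (hv : 0 ≤ v) (hu : 0 ≤ u) : 0 ≤ Gmaj v u := by
  unfold Gmaj
  split
  · have h1 : 0 ≤ u ^ (-(3:ℝ)/2) := Real.rpow_nonneg hu _
    have h2 := ind1_nonneg u
    have h3 := ind2_nonneg (u := u) hv
    linarith
  · positivity

noncomputable def gfun (v u : ℝ) : ℝ := u ^ (-(1:ℝ)/2) * Real.exp (-16*u^2*v)

lemma gfun_nonneg (v u : ℝ) (hu : 0 ≤ u) : 0 ≤ gfun v u := by
  unfold gfun; positivity

lemma exp_sq_le {v u : ℝ} (hv : 1 < v) (hu : v < u) :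
    Real.exp (-16*u^2*v) ≤ Real.exp (-8*v) * Real.exp (-8*u) := by
  rw [← Real.exp_add]
  apply Real.exp_le_exp.2
  nlinarith [sq_nonneg u, sq_nonneg (u-1)]

lemma gfun_le_Gmaj {v u : ℝ} (hv : 0 < v) (hu : v < u) (hu1 : u ≠ 1) :
    gfun v u ≤ Gmaj v u := by
  have hu0 : 0 < u := hv.trans hu
  have hE1 : Real.exp (-16*u^2*v) ≤ 1 := Real.exp_le_one_iff.2 (by nlinarith)
  have hE0 : (0:ℝ) < Real.exp (-16*u^2*v) := Real.exp_pos _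
  unfold Gmaj gfun
  rcases le_or_gt v 1 with hv1 | hv1
  · rw [if_pos hv1]
    have h2 : 0 ≤ u ^ (-(3:ℝ)/2) := Real.rpow_nonneg hu0.le _
    rcases lt_or_gt_of_ne hu1 with hu_lt | hu_gt
    · have hmem : u ∈ Set.Ioo (0:ℝ) 1 := ⟨hu0, hu_lt⟩
      rw [Set.indicator_of_mem hmem]
      have hgle : u ^ (-(1:ℝ)/2) * Real.exp (-16*u^2*v) ≤ u ^ (-(1:ℝ)/2) := by
        nlinarith [Real.rpow_nonneg hu0.le (-(1:ℝ)/2)]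
      have h3 := ind2_nonneg (u := u) hv.le
      linarith
    · rw [Set.indicator_of_mem (show u ∈ Set.Ioi (1:ℝ) from hu_gt)]
      have hEe : Real.exp (-16*u^2*v) ≤ Real.exp (-(16*u*v)) := by
        apply Real.exp_le_exp.2
        nlinarith [mul_nonneg (mul_nonneg (sub_nonneg.2 hu_gt.le) hu0.le) hv.le]
      have huv : 0 < 16*u*v := by positivity
      have hEr : Real.exp (-(16*u*v)) ≤ (16*u*v) ^ (-(3:ℝ)/4) := exp_neg_le_rpow huv
      have hsplit : (16*u*v) ^ (-(3:ℝ)/4)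
          = (16:ℝ) ^ (-(3:ℝ)/4) * u ^ (-(3:ℝ)/4) * v ^ (-(3:ℝ)/4) := by
        rw [Real.mul_rpow (by positivity) hv.le, Real.mul_rpow (by norm_num) hu0.le]
      have hcomb : u ^ (-(1:ℝ)/2) * ((16:ℝ) ^ (-(3:ℝ)/4) * u ^ (-(3:ℝ)/4) * v ^ (-(3:ℝ)/4))
          = (16:ℝ) ^ (-(3:ℝ)/4) * v ^ (-(3:ℝ)/4) * u ^ (-(5:ℝ)/4) := by
        rw [show (-(5:ℝ)/4) = (-(1:ℝ)/2) + (-(3:ℝ)/4) by norm_num, Real.rpow_add hu0]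
        ring
      have hmain : u ^ (-(1:ℝ)/2) * Real.exp (-16*u^2*v)
          ≤ (16:ℝ) ^ (-(3:ℝ)/4) * v ^ (-(3:ℝ)/4) * u ^ (-(5:ℝ)/4) := by
        calc u ^ (-(1:ℝ)/2) * Real.exp (-16*u^2*v)
            ≤ u ^ (-(1:ℝ)/2) * ((16*u*v) ^ (-(3:ℝ)/4)) :=
              mul_le_mul_of_nonneg_left (hEe.trans hEr) (Real.rpow_nonneg hu0.le _)
          _ = (16:ℝ) ^ (-(3:ℝ)/4) * v ^ (-(3:ℝ)/4) * u ^ (-(5:ℝ)/4) := by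
              rw [hsplit, hcomb]
      have h3 := ind1_nonneg u
      linarith
  · rw [if_neg (not_le.2 hv1)]
    have hu1' : 1 < u := hv1.trans hu
    have hgE : u ^ (-(1:ℝ)/2) * Real.exp (-16*u^2*v) ≤ Real.exp (-16*u^2*v) := by
      nlinarith [Real.rpow_le_one_of_one_le_of_nonpos hu1'.le
        (show (-(1:ℝ)/2) ≤ 0 by norm_num),
        Real.rpow_nonneg hu0.le (-(1:ℝ)/2)]
    have := exp_sq_le hv1 hu
    nlinarith

lemma gfun_cube_le_Gmaj {v u : ℝ} (hv : 0 < v) (hu : v < u) :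
    (gfun v u) ^ 3 ≤ Gmaj v u := by
  have hu0 : 0 < u := hv.trans hu
  have hE1 : Real.exp (-16*u^2*v) ≤ 1 := Real.exp_le_one_iff.2 (by nlinarith)
  have hE0 : (0:ℝ) < Real.exp (-16*u^2*v) := Real.exp_pos _
  unfold Gmaj gfun
  rcases le_or_gt v 1 with hv1 | hv1
  · rw [if_pos hv1]
    have hu3 : (u ^ (-(1:ℝ)/2)) ^ 3 = u ^ (-(3:ℝ)/2) := by
      rw [← Real.rpow_natCast (u ^ (-(1:ℝ)/2)) 3, ← Real.rpow_mul hu0.le]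
      norm_num
    have hE3 : Real.exp (-16*u^2*v) ^ 3 ≤ 1 := pow_le_one₀ hE0.le hE1
    have hg3le : (u ^ (-(1:ℝ)/2) * Real.exp (-16*u^2*v)) ^ 3 ≤ u ^ (-(3:ℝ)/2) := by
      calc (u ^ (-(1:ℝ)/2) * Real.exp (-16*u^2*v)) ^ 3
          = (u ^ (-(1:ℝ)/2)) ^ 3 * Real.exp (-16*u^2*v) ^ 3 := by ring
        _ ≤ (u ^ (-(1:ℝ)/2)) ^ 3 * 1 :=
            mul_le_mul_of_nonneg_left hE3 (by positivity)
        _ = u ^ (-(3:ℝ)/2) := by rw [mul_one, hu3]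
    have h2 := ind1_nonneg u
    have h3 := ind2_nonneg (u := u) hv.le
    linarith
  · rw [if_neg (not_le.2 hv1)]
    have hu1' : 1 < u := hv1.trans hu
    have hgE : u ^ (-(1:ℝ)/2) * Real.exp (-16*u^2*v) ≤ Real.exp (-16*u^2*v) := by
      nlinarith [Real.rpow_le_one_of_one_le_of_nonpos hu1'.le
        (show (-(1:ℝ)/2) ≤ 0 by norm_num),
        Real.rpow_nonneg hu0.le (-(1:ℝ)/2)]
    have hg0 : 0 ≤ u ^ (-(1:ℝ)/2) * Real.exp (-16*u^2*v) := by positivity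
    have hg1 : u ^ (-(1:ℝ)/2) * Real.exp (-16*u^2*v) ≤ 1 := hgE.trans hE1
    have hg3g : (u ^ (-(1:ℝ)/2) * Real.exp (-16*u^2*v)) ^ 3
        ≤ u ^ (-(1:ℝ)/2) * Real.exp (-16*u^2*v) :=
      pow_le_of_le_one hg0 hg1 (by norm_num)
    have := exp_sq_le hv1 hu
    nlinarith



lemma pointwise {A B v u : ℝ} (hv : 0 < v) (hu : v < u) (huA : u ≠ A) (hvB : v ≠ B)
    (hu1 : u ≠ 1) :
    ((A - u)^2 + (B - v)^2) ^ (-(1:ℝ)/2) * (u^2 + v^2) ^ (-(1:ℝ)/4) * Real.exp (-16*u^2*v)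
      ≤ (2:ℝ) ^ (-(3:ℝ)/4) * hB (v - B) * hB (u - A) + Gmaj v u := by
  have hu0 : 0 < u := hv.trans hu
  obtain ⟨a, ha_def⟩ : ∃ a, |u - A| = a := ⟨_, rfl⟩
  obtain ⟨b, hb_def⟩ : ∃ b, |v - B| = b := ⟨_, rfl⟩
  have ha : 0 < a := ha_def ▸ abs_pos.2 (sub_ne_zero.2 huA)
  have hb : 0 < b := hb_def ▸ abs_pos.2 (sub_ne_zero.2 hvB)
  have hd2 : (A - u)^2 + (B - v)^2 = a^2 + b^2 := by
    rw [← ha_def, ← hb_def, sq_abs, sq_abs]; ring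
  rw [hd2]
  have hd2pos : 0 < a^2 + b^2 := by positivity
  have hE0 : (0:ℝ) < Real.exp (-16*u^2*v) := Real.exp_pos _
  have hg0 : 0 ≤ gfun v u := by unfold gfun; positivity
  have hS : (u^2 + v^2) ^ (-(1:ℝ)/4) ≤ u ^ (-(1:ℝ)/2) := by
    have h1 : (u^2 + v^2) ^ (-(1:ℝ)/4) ≤ (u^2) ^ (-(1:ℝ)/4) :=
      Real.rpow_le_rpow_of_nonpos (by positivity) (by nlinarith) (by norm_num)
    have h2 : ((u:ℝ)^2) ^ (-(1:ℝ)/4) = u ^ (-(1:ℝ)/2) := by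
      rw [← Real.rpow_natCast u 2, ← Real.rpow_mul hu0.le]; norm_num
    linarith
  have hKS : (a^2 + b^2) ^ (-(1:ℝ)/2) * (u^2 + v^2) ^ (-(1:ℝ)/4) * Real.exp (-16*u^2*v)
      ≤ (a^2 + b^2) ^ (-(1:ℝ)/2) * gfun v u := by
    unfold gfun
    rw [← mul_assoc]
    apply mul_le_mul_of_nonneg_right _ hE0.le
    exact mul_le_mul_of_nonneg_left hS (Real.rpow_nonneg hd2pos.le _)
  rcases lt_or_ge (a^2 + b^2) 1 with hnear | hfar
  · have hKg : (a^2 + b^2) ^ (-(1:ℝ)/2) * gfun v u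
        ≤ ((a^2 + b^2) ^ (-(1:ℝ)/2)) ^ ((3:ℝ)/2) + (gfun v u) ^ 3 :=
      mul_le_rpow_add_cube (Real.rpow_nonneg hd2pos.le _) hg0
    have hK32 : ((a^2 + b^2) ^ (-(1:ℝ)/2)) ^ ((3:ℝ)/2) = (a^2 + b^2) ^ (-(3:ℝ)/4) := by
      rw [← Real.rpow_mul hd2pos.le]; norm_num
    have hab : (a^2+b^2) ^ (-(3:ℝ)/4) ≤ (2*a*b) ^ (-(3:ℝ)/4) :=
      Real.rpow_le_rpow_of_nonpos (by positivity) (by nlinarith [sq_nonneg (a-b)])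
        (by norm_num)
    have habsplit : (2*a*b) ^ (-(3:ℝ)/4)
        = (2:ℝ) ^ (-(3:ℝ)/4) * b ^ (-(3:ℝ)/4) * a ^ (-(3:ℝ)/4) := by
      rw [Real.mul_rpow (by positivity) hb.le, Real.mul_rpow (by norm_num) ha.le]; ring
    have ha1 : a < 1 := by nlinarith
    have hb1 : b < 1 := by nlinarith
    have hBa : hB (u - A) = a ^ (-(3:ℝ)/4) := by
      rw [hB, Set.indicator_of_mem (show u - A ∈ Set.Ioo (-1:ℝ) 1 by
        rw [Set.mem_Ioo, ← abs_lt, ha_def]; exact ha1)]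
      rw [ha_def]
    have hBb : hB (v - B) = b ^ (-(3:ℝ)/4) := by
      rw [hB, Set.indicator_of_mem (show v - B ∈ Set.Ioo (-1:ℝ) 1 by
        rw [Set.mem_Ioo, ← abs_lt, hb_def]; exact hb1)]
      rw [hb_def]
    have hg3 := gfun_cube_le_Gmaj hv hu
    calc (a^2 + b^2) ^ (-(1:ℝ)/2) * (u^2 + v^2) ^ (-(1:ℝ)/4) * Real.exp (-16*u^2*v)
        ≤ (a^2 + b^2) ^ (-(1:ℝ)/2) * gfun v u := hKS
      _ ≤ ((a^2 + b^2) ^ (-(1:ℝ)/2)) ^ ((3:ℝ)/2) + (gfun v u) ^ 3 := hKg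
      _ ≤ (2:ℝ) ^ (-(3:ℝ)/4) * b ^ (-(3:ℝ)/4) * a ^ (-(3:ℝ)/4) + Gmaj v u := by
          rw [hK32]
          exact add_le_add (hab.trans_eq habsplit) hg3
      _ = (2:ℝ) ^ (-(3:ℝ)/4) * hB (v - B) * hB (u - A) + Gmaj v u := by
          rw [hBa, hBb]
  · have hK1 : (a^2 + b^2) ^ (-(1:ℝ)/2) ≤ 1 :=
      Real.rpow_le_one_of_one_le_of_nonpos hfar (by norm_num)
    have h1 : (a^2 + b^2) ^ (-(1:ℝ)/2) * gfun v u ≤ gfun v u := by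
      nlinarith [Real.rpow_nonneg hd2pos.le (-(1:ℝ)/2)]
    have hhB : 0 ≤ (2:ℝ) ^ (-(3:ℝ)/4) * hB (v - B) * hB (u - A) := by
      have h2 := hB_nonneg (v - B); have h3 := hB_nonneg (u - A); positivity
    have h4 := gfun_le_Gmaj hv hu hu1
    linarith [hKS]



noncomputable def I0 : ℝ := ∫ x, hB x
noncomputable def c1 : ℝ := ∫ x in Set.Ioo (0:ℝ) 1, x ^ (-(1:ℝ)/2)
noncomputable def c3 : ℝ := ∫ x in Set.Ioi (1:ℝ), x ^ (-(5:ℝ)/4)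
noncomputable def ce : ℝ := ∫ x in Set.Ioi (0:ℝ), Real.exp (-8*x)

lemma c1_def : c1 = ∫ x in Set.Ioo (0:ℝ) 1, x ^ (-(1:ℝ)/2) := rfl
lemma c3_def : c3 = ∫ x in Set.Ioi (1:ℝ), x ^ (-(5:ℝ)/4) := rfl
lemma ce_def : ce = ∫ x in Set.Ioi (0:ℝ), Real.exp (-8*x) := rfl
lemma I0_def : I0 = ∫ x, hB x := rfl

noncomputable def psi (v : ℝ) : ℝ :=
  Set.indicator (Set.Ioc (0:ℝ) 1)
    (fun w => 2 * w ^ (-(1:ℝ)/2) + c1 + (16:ℝ) ^ (-(3:ℝ)/4) * c3 * w ^ (-(3:ℝ)/4)) v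
  + Set.indicator (Set.Ioi (1:ℝ)) (fun w => 2 * ce * Real.exp (-8*w)) v

lemma ioo_rpow_integrable : IntegrableOn (fun x : ℝ => x ^ (-(1:ℝ)/2)) (Set.Ioo (0:ℝ) 1) := by
  have := intervalIntegrable_rpow' (a := 0) (b := 1) (r := -(1:ℝ)/2) (by norm_num)
  rwa [intervalIntegrable_iff_integrableOn_Ioo_of_le zero_le_one] at this

lemma ioi_rpow54_integrable : IntegrableOn (fun x : ℝ => x ^ (-(5:ℝ)/4)) (Set.Ioi (1:ℝ)) :=
  integrableOn_Ioi_rpow_of_lt (by norm_num) one_pos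

lemma exp8_integrable : IntegrableOn (fun x : ℝ => Real.exp (-8*x)) (Set.Ioi (0:ℝ)) :=
  exp_neg_integrableOn_Ioi 0 (by norm_num : (0:ℝ) < 8)

-- inner bound
lemma inner_bound (A B v : ℝ) (hv : 0 < v) (hvB : v ≠ B) :
    (∫ u in Set.Ioi v,
      ((A - u)^2 + (B - v)^2) ^ (-(1:ℝ)/2) * (u^2 + v^2) ^ (-(1:ℝ)/4) * Real.exp (-16*u^2*v))
      ≤ (2:ℝ) ^ (-(3:ℝ)/4) * I0 * hB (v - B) + psi v := by
  have hconst : 0 ≤ (2:ℝ) ^ (-(3:ℝ)/4) * hB (v - B) :=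
    mul_nonneg (Real.rpow_nonneg (by norm_num) _) (hB_nonneg _)
  -- integrability of the majorant pieces
  have hT1 : IntegrableOn (fun u => (2:ℝ) ^ (-(3:ℝ)/4) * hB (v - B) * hB (u - A))
      (Set.Ioi v) := by
    have : Integrable (fun u => (2:ℝ) ^ (-(3:ℝ)/4) * hB (v - B) * hB (u - A)) := by
      simpa [mul_assoc] using ((hB_comp_integrable A).const_mul ((2:ℝ) ^ (-(3:ℝ)/4) * hB (v - B)))
    exact this.integrableOn
  have hGm : IntegrableOn (fun u => Gmaj v u) (Set.Ioi v) := by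
    rcases le_or_gt v 1 with hv1 | hv1
    · have hfe : (fun u => Gmaj v u) = fun u =>
          u ^ (-(3:ℝ)/2) + Set.indicator (Set.Ioo (0:ℝ) 1) (fun x => x ^ (-(1:ℝ)/2)) u
          + Set.indicator (Set.Ioi (1:ℝ))
              (fun x => (16:ℝ) ^ (-(3:ℝ)/4) * v ^ (-(3:ℝ)/4) * x ^ (-(5:ℝ)/4)) u := by
        funext u; unfold Gmaj; rw [if_pos hv1]
      rw [hfe]
      have i1 : IntegrableOn (fun u : ℝ => u ^ (-(3:ℝ)/2)) (Set.Ioi v) :=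
        integrableOn_Ioi_rpow_of_lt (by norm_num) hv
      have i2 : Integrable (Set.indicator (Set.Ioo (0:ℝ) 1) (fun x : ℝ => x ^ (-(1:ℝ)/2))) :=
        (integrable_indicator_iff measurableSet_Ioo).2 ioo_rpow_integrable
      have i3 : Integrable (Set.indicator (Set.Ioi (1:ℝ))
          (fun x : ℝ => (16:ℝ) ^ (-(3:ℝ)/4) * v ^ (-(3:ℝ)/4) * x ^ (-(5:ℝ)/4))) := by
        refine (integrable_indicator_iff measurableSet_Ioi).2 ?_
        simpa [mul_assoc, IntegrableOn] using ioi_rpow54_integrable.const_mul ((16:ℝ) ^ (-(3:ℝ)/4) * v ^ (-(3:ℝ)/4))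
      exact (i1.add i2.integrableOn).add i3.integrableOn
    · have hfe : (fun u => Gmaj v u) = fun u => 2 * Real.exp (-8*v) * Real.exp (-8*u) := by
        funext u; unfold Gmaj; rw [if_neg (not_le.2 hv1)]
      rw [hfe]
      exact ((exp_neg_integrableOn_Ioi v (by norm_num : (0:ℝ) < 8)).const_mul
        (2 * Real.exp (-8*v)))
  have hMi : IntegrableOn (fun u => (2:ℝ) ^ (-(3:ℝ)/4) * hB (v - B) * hB (u - A) + Gmaj v u)
      (Set.Ioi v) := hT1.add hGm
  -- a.e. inequality
  have hae : ∀ᵐ u ∂(volume.restrict (Set.Ioi v)),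
      ((A - u)^2 + (B - v)^2) ^ (-(1:ℝ)/2) * (u^2 + v^2) ^ (-(1:ℝ)/4) * Real.exp (-16*u^2*v)
      ≤ (2:ℝ) ^ (-(3:ℝ)/4) * hB (v - B) * hB (u - A) + Gmaj v u := by
    have hnull : ∀ᵐ u : ℝ ∂volume, u ∉ ({A, 1} : Set ℝ) := by
      rw [← MeasureTheory.measure_eq_zero_iff_ae_notMem, Set.insert_eq]
      exact measure_union_null (measure_singleton A) (measure_singleton 1)
    filter_upwards [ae_restrict_mem measurableSet_Ioi, ae_restrict_of_ae hnull] with u hu hnot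
    exact pointwise hv hu (fun h => hnot (by simp [h])) hvB (fun h => hnot (by simp [h]))
  have h0 : 0 ≤ᵐ[volume.restrict (Set.Ioi v)] fun u =>
      ((A - u)^2 + (B - v)^2) ^ (-(1:ℝ)/2) * (u^2 + v^2) ^ (-(1:ℝ)/4)
        * Real.exp (-16*u^2*v) :=
    Filter.Eventually.of_forall (fun u => by positivity)
  refine le_trans (integral_mono_of_nonneg h0 hMi hae) ?_
  -- now compute/bound the majorant integral
  rw [integral_add hT1 hGm]
  have hpart1 : (∫ u in Set.Ioi v, (2:ℝ) ^ (-(3:ℝ)/4) * hB (v - B) * hB (u - A))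
      ≤ (2:ℝ) ^ (-(3:ℝ)/4) * I0 * hB (v - B) := by
    have heq : (∫ u in Set.Ioi v, (2:ℝ) ^ (-(3:ℝ)/4) * hB (v - B) * hB (u - A))
        = ((2:ℝ) ^ (-(3:ℝ)/4) * hB (v - B)) * ∫ u in Set.Ioi v, hB (u - A) := by
      rw [← MeasureTheory.integral_const_mul]
    rw [heq]
    have hle : (∫ u in Set.Ioi v, hB (u - A)) ≤ I0 := by
      have := setIntegral_le_integral (hB_comp_integrable A)
        (Filter.Eventually.of_forall (fun u => hB_nonneg (u - A))) (s := Set.Ioi v)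
      rw [hB_comp_integral A] at this
      exact this
    calc ((2:ℝ) ^ (-(3:ℝ)/4) * hB (v - B)) * ∫ u in Set.Ioi v, hB (u - A)
        ≤ ((2:ℝ) ^ (-(3:ℝ)/4) * hB (v - B)) * I0 :=
          mul_le_mul_of_nonneg_left hle hconst
      _ = (2:ℝ) ^ (-(3:ℝ)/4) * I0 * hB (v - B) := by ring
  have hpart2 : (∫ u in Set.Ioi v, Gmaj v u) ≤ psi v := by
    rcases le_or_gt v 1 with hv1 | hv1
    · have hfe : (fun u => Gmaj v u) = fun u =>
          u ^ (-(3:ℝ)/2) + Set.indicator (Set.Ioo (0:ℝ) 1) (fun x => x ^ (-(1:ℝ)/2)) u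
          + Set.indicator (Set.Ioi (1:ℝ))
              (fun x => (16:ℝ) ^ (-(3:ℝ)/4) * v ^ (-(3:ℝ)/4) * x ^ (-(5:ℝ)/4)) u := by
        funext u; unfold Gmaj; rw [if_pos hv1]
      have i1 : IntegrableOn (fun u : ℝ => u ^ (-(3:ℝ)/2)) (Set.Ioi v) :=
        integrableOn_Ioi_rpow_of_lt (by norm_num) hv
      have i2 : Integrable (Set.indicator (Set.Ioo (0:ℝ) 1) (fun x : ℝ => x ^ (-(1:ℝ)/2))) :=
        (integrable_indicator_iff measurableSet_Ioo).2 ioo_rpow_integrable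
      have i3 : Integrable (Set.indicator (Set.Ioi (1:ℝ))
          (fun x : ℝ => (16:ℝ) ^ (-(3:ℝ)/4) * v ^ (-(3:ℝ)/4) * x ^ (-(5:ℝ)/4))) := by
        refine (integrable_indicator_iff measurableSet_Ioi).2 ?_
        simpa [mul_assoc, IntegrableOn] using ioi_rpow54_integrable.const_mul ((16:ℝ) ^ (-(3:ℝ)/4) * v ^ (-(3:ℝ)/4))
      have i12 : IntegrableOn (fun u : ℝ => u ^ (-(3:ℝ)/2)
          + Set.indicator (Set.Ioo (0:ℝ) 1) (fun x : ℝ => x ^ (-(1:ℝ)/2)) u) (Set.Ioi v) :=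
        i1.add i2.integrableOn
      rw [hfe, integral_add i12 i3.integrableOn, integral_add i1 i2.integrableOn]
      have e1 : (∫ u in Set.Ioi v, u ^ (-(3:ℝ)/2)) = 2 * v ^ (-(1:ℝ)/2) := by
        rw [integral_Ioi_rpow_of_lt (by norm_num) hv]
        rw [show (-(3:ℝ)/2 + 1) = -(1:ℝ)/2 by norm_num]
        ring
      have e2 : (∫ u in Set.Ioi v, Set.indicator (Set.Ioo (0:ℝ) 1)
          (fun x : ℝ => x ^ (-(1:ℝ)/2)) u) ≤ c1 := by
        have hle := setIntegral_le_integral i2 (Filter.Eventually.of_forall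
          (fun u => Set.indicator_nonneg (fun y hy => Real.rpow_nonneg hy.1.le _) u))
          (s := Set.Ioi v)
        refine hle.trans (le_of_eq ?_)
        rw [MeasureTheory.integral_indicator measurableSet_Ioo, c1_def]
      have e3 : (∫ u in Set.Ioi v, Set.indicator (Set.Ioi (1:ℝ))
          (fun x : ℝ => (16:ℝ) ^ (-(3:ℝ)/4) * v ^ (-(3:ℝ)/4) * x ^ (-(5:ℝ)/4)) u)
          ≤ (16:ℝ) ^ (-(3:ℝ)/4) * c3 * v ^ (-(3:ℝ)/4) := by
        have hle := setIntegral_le_integral i3 (Filter.Eventually.of_forall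
          (fun u => Set.indicator_nonneg (fun y hy => by
            exact mul_nonneg (mul_nonneg (Real.rpow_nonneg (by norm_num) _)
              (Real.rpow_nonneg hv.le _)) (Real.rpow_nonneg
                (zero_le_one.trans (le_of_lt hy)) _)) u))
          (s := Set.Ioi v)
        refine hle.trans (le_of_eq ?_)
        rw [MeasureTheory.integral_indicator measurableSet_Ioi,
          MeasureTheory.integral_const_mul, ← c3_def]
        ring
      have hpsi : psi v = 2 * v ^ (-(1:ℝ)/2) + c1 + (16:ℝ) ^ (-(3:ℝ)/4) * c3 * v ^ (-(3:ℝ)/4) := by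
        rw [psi, Set.indicator_of_mem (Set.mem_Ioc.2 ⟨hv, hv1⟩),
          Set.indicator_of_notMem (by simp [Set.mem_Ioi]; exact hv1)]
        ring
      rw [hpsi]
      linarith
    · have hfe : (fun u => Gmaj v u) = fun u => 2 * Real.exp (-8*v) * Real.exp (-8*u) := by
        funext u; unfold Gmaj; rw [if_neg (not_le.2 hv1)]
      rw [hfe]
      have heq : (∫ u in Set.Ioi v, 2 * Real.exp (-8*v) * Real.exp (-8*u))
          = (2 * Real.exp (-8*v)) * ∫ u in Set.Ioi v, Real.exp (-8*u) :=
        MeasureTheory.integral_const_mul _ _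
      rw [heq]
      have hsub : (∫ u in Set.Ioi v, Real.exp (-8*u)) ≤ ce := by
        rw [ce_def]
        refine setIntegral_mono_set exp8_integrable
          (Filter.Eventually.of_forall (fun u => (Real.exp_pos _).le)) ?_
        exact HasSubset.Subset.eventuallyLE (Set.Ioi_subset_Ioi (by linarith))
      have hpsi : psi v = 2 * ce * Real.exp (-8*v) := by
        rw [psi, Set.indicator_of_notMem (by simp [Set.mem_Ioc]; intro h; linarith),
          Set.indicator_of_mem (Set.mem_Ioi.2 hv1)]
        ring
      rw [hpsi]
      calc (2 * Real.exp (-8*v)) * ∫ u in Set.Ioi v, Real.exp (-8*u)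
          ≤ (2 * Real.exp (-8*v)) * ce :=
            mul_le_mul_of_nonneg_left hsub (by positivity)
        _ = 2 * ce * Real.exp (-8*v) := by ring
  linarith



lemma I0_nonneg : 0 ≤ I0 := integral_nonneg hB_nonneg

lemma c1_nonneg : 0 ≤ c1 :=
  setIntegral_nonneg measurableSet_Ioo (fun x hx => Real.rpow_nonneg hx.1.le _)

lemma c3_nonneg : 0 ≤ c3 :=
  setIntegral_nonneg measurableSet_Ioi
    (fun x hx => Real.rpow_nonneg (zero_le_one.trans (le_of_lt hx)) _)

lemma ce_nonneg : 0 ≤ ce :=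
  setIntegral_nonneg measurableSet_Ioi (fun x _ => (Real.exp_pos _).le)

lemma psi_nonneg (v : ℝ) : 0 ≤ psi v := by
  unfold psi
  have h1 : 0 ≤ Set.indicator (Set.Ioc (0:ℝ) 1)
      (fun w => 2 * w ^ (-(1:ℝ)/2) + c1 + (16:ℝ) ^ (-(3:ℝ)/4) * c3 * w ^ (-(3:ℝ)/4)) v := by
    refine Set.indicator_nonneg (fun w hw => ?_) v
    have h1 : 0 ≤ w ^ (-(1:ℝ)/2) := Real.rpow_nonneg hw.1.le _
    have h2 : 0 ≤ w ^ (-(3:ℝ)/4) := Real.rpow_nonneg hw.1.le _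
    have h3 : 0 ≤ (16:ℝ) ^ (-(3:ℝ)/4) := Real.rpow_nonneg (by norm_num) _
    have h4 : 0 ≤ (16:ℝ) ^ (-(3:ℝ)/4) * c3 * w ^ (-(3:ℝ)/4) :=
      mul_nonneg (mul_nonneg h3 c3_nonneg) h2
    linarith [c1_nonneg]
  have h2 : 0 ≤ Set.indicator (Set.Ioi (1:ℝ)) (fun w => 2 * ce * Real.exp (-8*w)) v := by
    refine Set.indicator_nonneg (fun w _ => ?_) v
    have := ce_nonneg
    positivity
  linarith

lemma psi_integrable : Integrable psi := by
  unfold psi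
  have h1 : Integrable (Set.indicator (Set.Ioc (0:ℝ) 1)
      (fun w : ℝ => 2 * w ^ (-(1:ℝ)/2) + c1 + (16:ℝ) ^ (-(3:ℝ)/4) * c3 * w ^ (-(3:ℝ)/4))) := by
    refine (integrable_indicator_iff measurableSet_Ioc).2 ?_
    have i1 : IntegrableOn (fun w : ℝ => w ^ (-(1:ℝ)/2)) (Set.Ioc (0:ℝ) 1) := by
      have := intervalIntegrable_rpow' (a := 0) (b := 1) (r := -(1:ℝ)/2) (by norm_num)
      rwa [intervalIntegrable_iff_integrableOn_Ioc_of_le zero_le_one] at this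
    have i2 : IntegrableOn (fun w : ℝ => w ^ (-(3:ℝ)/4)) (Set.Ioc (0:ℝ) 1) := by
      have := intervalIntegrable_rpow' (a := 0) (b := 1) (r := -(3:ℝ)/4) (by norm_num)
      rwa [intervalIntegrable_iff_integrableOn_Ioc_of_le zero_le_one] at this
    have ic : IntegrableOn (fun _ : ℝ => c1) (Set.Ioc (0:ℝ) 1) :=
      integrableOn_const measure_Ioc_lt_top.ne
    exact ((i1.const_mul 2).add ic).add (i2.const_mul _)
  have h2 : Integrable (Set.indicator (Set.Ioi (1:ℝ))
      (fun w : ℝ => 2 * ce * Real.exp (-8*w))) := by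
    refine (integrable_indicator_iff measurableSet_Ioi).2 ?_
    exact (exp_neg_integrableOn_Ioi 1 (by norm_num : (0:ℝ) < 8)).const_mul _
  exact h1.add h2

noncomputable def Cpsi : ℝ := ∫ x, psi x

lemma Cpsi_nonneg : 0 ≤ Cpsi := integral_nonneg psi_nonneg

noncomputable def Dconst : ℝ := (2:ℝ) ^ (-(3:ℝ)/4) * I0 * I0 + Cpsi

lemma Dconst_nonneg : 0 ≤ Dconst := by
  have h1 : 0 ≤ (2:ℝ) ^ (-(3:ℝ)/4) := Real.rpow_nonneg (by norm_num) _
  have := I0_nonneg; have := Cpsi_nonneg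
  unfold Dconst; positivity

-- outer bound
lemma outer_bound (A B : ℝ) :
    (∫ v in Set.Ioi (0:ℝ), ∫ u in Set.Ioi v,
      ((A - u)^2 + (B - v)^2) ^ (-(1:ℝ)/2) * (u^2 + v^2) ^ (-(1:ℝ)/4) * Real.exp (-16*u^2*v))
      ≤ Dconst := by
  set Phi : ℝ → ℝ := fun v => (2:ℝ) ^ (-(3:ℝ)/4) * I0 * hB (v - B) + psi v with hPhi_def
  have hPhiInt : IntegrableOn Phi (Set.Ioi (0:ℝ)) := by
    refine Integrable.integrableOn ?_
    exact ((hB_comp_integrable B).const_mul ((2:ℝ) ^ (-(3:ℝ)/4) * I0)).add psi_integrable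
  have h0 : 0 ≤ᵐ[volume.restrict (Set.Ioi (0:ℝ))] fun v =>
      ∫ u in Set.Ioi v, ((A - u)^2 + (B - v)^2) ^ (-(1:ℝ)/2) * (u^2 + v^2) ^ (-(1:ℝ)/4)
        * Real.exp (-16*u^2*v) := by
    refine Filter.Eventually.of_forall (fun v => ?_)
    exact integral_nonneg (fun u => by positivity)
  have hae : (fun v => ∫ u in Set.Ioi v, ((A - u)^2 + (B - v)^2) ^ (-(1:ℝ)/2)
      * (u^2 + v^2) ^ (-(1:ℝ)/4) * Real.exp (-16*u^2*v))
      ≤ᵐ[volume.restrict (Set.Ioi (0:ℝ))] Phi := by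
    have hnull : ∀ᵐ v : ℝ ∂volume, v ≠ B := by
      have h := (MeasureTheory.measure_eq_zero_iff_ae_notMem (μ := (volume : Measure ℝ))).1
        (measure_singleton B)
      simpa using h
    filter_upwards [ae_restrict_mem measurableSet_Ioi, ae_restrict_of_ae hnull] with v hv hvB
    exact inner_bound A B v hv hvB
  refine le_trans (integral_mono_of_nonneg h0 hPhiInt hae) ?_
  rw [hPhi_def, integral_add (((hB_comp_integrable B).const_mul
    ((2:ℝ) ^ (-(3:ℝ)/4) * I0)).integrableOn) psi_integrable.integrableOn]
  have hp1 : (∫ v in Set.Ioi (0:ℝ), (2:ℝ) ^ (-(3:ℝ)/4) * I0 * hB (v - B))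
      ≤ (2:ℝ) ^ (-(3:ℝ)/4) * I0 * I0 := by
    rw [MeasureTheory.integral_const_mul]
    refine mul_le_mul_of_nonneg_left ?_
      (mul_nonneg (Real.rpow_nonneg (by norm_num) _) I0_nonneg)
    have := setIntegral_le_integral (hB_comp_integrable B)
      (Filter.Eventually.of_forall (fun v => hB_nonneg (v - B))) (s := Set.Ioi (0:ℝ))
    rwa [hB_comp_integral B] at this
  have hp2 : (∫ v in Set.Ioi (0:ℝ), psi v) ≤ Cpsi := by
    rw [Cpsi]
    exact setIntegral_le_integral psi_integrable
      (Filter.Eventually.of_forall psi_nonneg) (s := Set.Ioi (0:ℝ))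
  unfold Dconst
  linarith


end Stmt15Aux
end

open Stmt15Aux in
/-- Region III ∂̄-estimate via Hölder: for `4 < p < ∞` there is `C_p` such that for
all `t ≥ 1` the double integral with Cauchy kernel, singular factor
`t^{-1/6}(u²+v²)^{-1/4}` and decay `e^{-16u²v}` is at most `C_p · t^{2/(3p)-1/6}`. -/
theorem stmt_15 (p : ℝ) (hp : 4 < p) :
    ∃ C : ℝ, 0 < C ∧ ∀ t : ℝ, 1 ≤ t → ∀ c α β : ℝ,
      (∫ v in Set.Ioi (0 : ℝ), ∫ u in Set.Ioi v,
          ((α - c - u) ^ 2 + (β - v) ^ 2) ^ (-(1 : ℝ) / 2) *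
            (t ^ (-(1 : ℝ) / 6) * (u ^ 2 + v ^ 2) ^ (-(1 : ℝ) / 4)) *
            Real.exp (-16 * u ^ 2 * v)) ≤
        C * t ^ (2 / (3 * p) - 1 / 6) := by
  refine ⟨Dconst + 1, by linarith [Dconst_nonneg], ?_⟩
  intro t ht c α β
  have ht0 : (0:ℝ) < t := lt_of_lt_of_le one_pos ht
  have key := outer_bound (α - c) β
  have hrw : (∫ v in Set.Ioi (0:ℝ), ∫ u in Set.Ioi v,
      ((α - c - u) ^ 2 + (β - v) ^ 2) ^ (-(1:ℝ)/2) *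
        (t ^ (-(1:ℝ)/6) * (u^2+v^2) ^ (-(1:ℝ)/4)) * Real.exp (-16*u^2*v))
      = t ^ (-(1:ℝ)/6) * ∫ v in Set.Ioi (0:ℝ), ∫ u in Set.Ioi v,
        ((α - c - u) ^ 2 + (β - v) ^ 2) ^ (-(1:ℝ)/2) * (u^2+v^2) ^ (-(1:ℝ)/4)
          * Real.exp (-16*u^2*v) := by
    rw [← MeasureTheory.integral_const_mul]
    refine integral_congr_ae (Filter.Eventually.of_forall (fun v => ?_))
    simp only
    rw [← MeasureTheory.integral_const_mul]
    refine integral_congr_ae (Filter.Eventually.of_forall (fun u => ?_))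
    ring
  rw [hrw]
  have hτ : t ^ (-(1:ℝ)/6) ≤ t ^ (2/(3*p) - 1/6) := by
    apply Real.rpow_le_rpow_of_exponent_le ht
    have h3p : 0 < 3*p := by linarith
    have : 0 < 2/(3*p) := div_pos two_pos h3p
    linarith
  have hτ0 : 0 ≤ t ^ (-(1:ℝ)/6) := (Real.rpow_pos_of_pos ht0 _).le
  have hpow : 0 < t ^ (2/(3*p) - 1/6) := Real.rpow_pos_of_pos ht0 _
  calc t ^ (-(1:ℝ)/6) * (∫ v in Set.Ioi (0:ℝ), ∫ u in Set.Ioi v,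
        ((α - c - u) ^ 2 + (β - v) ^ 2) ^ (-(1:ℝ)/2) * (u^2+v^2) ^ (-(1:ℝ)/4)
          * Real.exp (-16*u^2*v))
      ≤ t ^ (-(1:ℝ)/6) * Dconst := mul_le_mul_of_nonneg_left key hτ0
    _ ≤ t ^ (2/(3*p) - 1/6) * Dconst := mul_le_mul_of_nonneg_right hτ Dconst_nonneg
    _ ≤ (Dconst + 1) * t ^ (2/(3*p) - 1/6) := by nlinarith
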